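/- Embedding of the loop algebra into self-intertwiners of the charge component: for a locally-valued 1-cocycle z with path-frame P_o, define ρ_a(X) := z(p_{(a,o)}) X z(p_{(a,o)})* for X in the von Neumann algebra R^z(o) generated by {z(ℓ) : ℓ loop at o}. Then ρ, as the family (ρ_a), is an injective *-morphism into the self-intertwiners of the charge component ẑ: ρ_{∂₀b}(X)·ẑ(b) = ẑ(b)·ρ_{∂₁b}(X) for all 1-simplices b and X ∈ R^z(o). Moreover, if X lies in the centre of R^z(o), then ρ_{∂₀b}(X)·z(b) = z(b)·ρ_{∂₁b}(X), i.e. ρ(X) is a self-intertwiner of z itself. -/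

import Mathlib

/-- A 1-simplex of a poset `K`: two faces and a support dominating both. -/
structure OneSimplex (K : Type*) [PartialOrder K] where
  face0 : K
  face1 : K
  supp : K
  le0 : face0 ≤ supp
  le1 : face1 ≤ supp

/-- The reverse of a 1-simplex: same support, exchanged faces. -/
def OneSimplex.rev {K : Type*} [PartialOrder K] (b : OneSimplex K) : OneSimplex K :=
  ⟨b.face1, b.face0, b.supp, b.le1, b.le0⟩

/-- The degenerate 1-simplex `σ₀ a` at a 0-simplex `a`. -/
def OneSimplex.degenerate {K : Type*} [PartialOrder K] (a : K) : OneSimplex K :=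
  ⟨a, a, a, le_refl a, le_refl a⟩

/-- A 2-simplex of a poset `K`, presented by its three vertices, the supports of its
three faces, and its own support, with all required order relations. Its faces
`∂₀c, ∂₁c, ∂₂c` satisfy the simplicial identities by construction. -/
structure TwoSimplex (K : Type*) [PartialOrder K] where
  vstart : K
  vmid : K
  vend : K
  s0 : K
  s1 : K
  s2 : K
  supp : K
  hs0 : s0 ≤ supp
  hs1 : s1 ≤ supp
  hs2 : s2 ≤ supp
  h0s : vmid ≤ s0
  h0e : vend ≤ s0
  h1s : vstart ≤ s1
  h1e : vend ≤ s1
  h2s : vstart ≤ s2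
  h2e : vmid ≤ s2

/-- The face `∂₀c` (from `vmid` to `vend`). -/
def TwoSimplex.face0 {K : Type*} [PartialOrder K] (c : TwoSimplex K) : OneSimplex K :=
  ⟨c.vend, c.vmid, c.s0, c.h0e, c.h0s⟩

/-- The face `∂₁c` (from `vstart` to `vend`). -/
def TwoSimplex.face1 {K : Type*} [PartialOrder K] (c : TwoSimplex K) : OneSimplex K :=
  ⟨c.vend, c.vstart, c.s1, c.h1e, c.h1s⟩

/-- The face `∂₂c` (from `vstart` to `vmid`). -/
def TwoSimplex.face2 {K : Type*} [PartialOrder K] (c : TwoSimplex K) : OneSimplex K :=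
  ⟨c.vmid, c.vstart, c.s2, c.h2e, c.h2s⟩

/-- A path in the poset `K` from `x` to `y`: a nonempty composable string of
1-simplices, `∂₁` of the first being `x` and `∂₀` of the last being `y`. -/
inductive PPath (K : Type*) [PartialOrder K] : K → K → Type _
  | single (b : OneSimplex K) : PPath K b.face1 b.face0
  | cons (b : OneSimplex K) {x : K} (p : PPath K x b.face1) : PPath K x b.face0

/-- Composition of paths: `q.comp p` first traverses `p`, then `q`. -/
def PPath.comp {K : Type*} [PartialOrder K] : ∀ {x y w : K}, PPath K y w → PPath K x y → PPath K x w
  | _, _, _, .single b, p => .cons b p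
  | _, _, _, .cons b q, p => .cons b (q.comp p)

/-- The reverse of a path. -/
def PPath.rev {K : Type*} [PartialOrder K] : ∀ {x y : K}, PPath K x y → PPath K y x
  | _, _, .single b => .single b.rev
  | _, _, .cons b p => PPath.comp p.rev (.single b.rev)

/-- Multiplicative extension of a function on 1-simplices to paths:
`z(bₙ * ⋯ * b₁) = z(bₙ) ⋯ z(b₁)`. -/
def PPath.eval {K : Type*} [PartialOrder K] {M : Type*} [Monoid M]
    (z : OneSimplex K → M) : ∀ {x y : K}, PPath K x y → M
  | _, _, .single b => z b
  | _, _, .cons b p => z b * p.eval z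

/-- The support of the path is causally disjoint from `o` (every 1-simplex of the path
has support `⊥ o`). -/
def PPath.suppDisjoint {K : Type*} [PartialOrder K] (perp : K → K → Prop) (o : K) :
    ∀ {x y : K}, PPath K x y → Prop
  | _, _, .single b => perp b.supp o
  | _, _, .cons b p => perp b.supp o ∧ p.suppDisjoint perp o

/-- Homotopy of paths with the same endpoints: the equivalence relation generated by
elementary deformations (replacing `∂₁c` by `∂₀c * ∂₂c` for a 2-simplex `c`), compatible
with composition. -/
inductive PHomotopic {K : Type*} [PartialOrder K] : ∀ {x y : K}, PPath K x y → PPath K x y → Prop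
  | refl {x y : K} (p : PPath K x y) : PHomotopic p p
  | symm {x y : K} {p q : PPath K x y} : PHomotopic p q → PHomotopic q p
  | trans {x y : K} {p q r : PPath K x y} : PHomotopic p q → PHomotopic q r → PHomotopic p r
  | deform (c : TwoSimplex K) :
      PHomotopic (.single c.face1) ((PPath.single c.face0).comp (.single c.face2))
  | comp_congr {x y w : K} {q q' : PPath K y w} {p p' : PPath K x y} :
      PHomotopic q q' → PHomotopic p p' → PHomotopic (q.comp p) (q'.comp p')

/-- The charge component of a 1-cocycle with respect to a path-frame `P` with pole `o`:
`ẑ(b) := z(p_{(∂₀b,o)} * p̄_{(∂₁b,o)})`. -/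
def chargeComp {K : Type*} [PartialOrder K] {M : Type*} [Monoid M] {o : K}
    (P : ∀ a : K, PPath K o a) (z : OneSimplex K → M) (b : OneSimplex K) : M :=
  ((P b.face0).comp (P b.face1).rev).eval z

/-- The von Neumann algebra (double commutant) generated by the values of a 1-cocycle on
loops based at `o`. -/
def loopVN {K : Type*} [PartialOrder K]
    {H : Type*} [NormedAddCommGroup H] [InnerProductSpace ℂ H] [CompleteSpace H]
    (o : K) (z : OneSimplex K → (H →L[ℂ] H)) : Set (H →L[ℂ] H) :=
  Set.centralizer (Set.centralizer {T : H →L[ℂ] H | ∃ ℓ : PPath K o o, ℓ.eval z = T})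

section Aux

variable {K : Type*} [PartialOrder K]
variable {H : Type*} [NormedAddCommGroup H] [InnerProductSpace ℂ H] [CompleteSpace H]

lemma PPath.eval_comp {M : Type*} [Monoid M] (z : OneSimplex K → M) :
    ∀ {x y w : K} (q : PPath K y w) (p : PPath K x y),
      (q.comp p).eval z = q.eval z * p.eval z
  | _, _, _, .single b, p => rfl
  | _, _, _, .cons b q, p => by
      show z b * (q.comp p).eval z = (z b * q.eval z) * p.eval z
      rw [PPath.eval_comp z q p, mul_assoc]

lemma z_idem_one (z : OneSimplex K → (H →L[ℂ] H))
    (hzu : ∀ b : OneSimplex K, z b ∈ unitary (H →L[ℂ] H))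
    (hzc : ∀ c : TwoSimplex K, z c.face0 * z c.face2 = z c.face1)
    (a s : K) (h : a ≤ s) : z ⟨a, a, s, h, h⟩ = 1 := by
  set u : OneSimplex K := ⟨a, a, s, h, h⟩
  have hidem : z u * z u = z u :=
    hzc ⟨a, a, a, s, s, s, s, le_refl s, le_refl s, le_refl s, h, h, h, h, h, h⟩
  have h1 : star (z u) * z u = 1 := ((Unitary.mem_iff).1 (hzu u)).1
  calc z u = star (z u) * (z u * z u) := by rw [← mul_assoc, h1, one_mul]
    _ = star (z u) * z u := by rw [hidem]
    _ = 1 := h1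

lemma z_rev_star (z : OneSimplex K → (H →L[ℂ] H))
    (hzu : ∀ b : OneSimplex K, z b ∈ unitary (H →L[ℂ] H))
    (hzc : ∀ c : TwoSimplex K, z c.face0 * z c.face2 = z c.face1)
    (b : OneSimplex K) : z b.rev = star (z b) := by
  have hc : z b * z b.rev = z ⟨b.face0, b.face0, b.supp, b.le0, b.le0⟩ :=
    hzc ⟨b.face0, b.face1, b.face0, b.supp, b.supp, b.supp, b.supp,
      le_refl _, le_refl _, le_refl _, b.le1, b.le0, b.le0, b.le0, b.le0, b.le1⟩
  rw [z_idem_one z hzu hzc b.face0 b.supp b.le0] at hc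
  have h1 : star (z b) * z b = 1 := ((Unitary.mem_iff).1 (hzu b)).1
  calc z b.rev = (star (z b) * z b) * z b.rev := by rw [h1, one_mul]
    _ = star (z b) * (z b * z b.rev) := by rw [mul_assoc]
    _ = star (z b) := by rw [hc, mul_one]

lemma eval_rev_star (z : OneSimplex K → (H →L[ℂ] H))
    (hzu : ∀ b : OneSimplex K, z b ∈ unitary (H →L[ℂ] H))
    (hzc : ∀ c : TwoSimplex K, z c.face0 * z c.face2 = z c.face1) :
    ∀ {x y : K} (p : PPath K x y), p.rev.eval z = star (p.eval z)
  | _, _, .single b => z_rev_star z hzu hzc b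
  | _, _, .cons b p => by
      show (PPath.comp p.rev (.single b.rev)).eval z = star (z b * p.eval z)
      refine (PPath.eval_comp z p.rev (.single b.rev)).trans ?_
      rw [eval_rev_star z hzu hzc p, star_mul]
      show star (p.eval z) * z b.rev = _
      rw [z_rev_star z hzu hzc b]

lemma eval_unitary (z : OneSimplex K → (H →L[ℂ] H))
    (hzu : ∀ b : OneSimplex K, z b ∈ unitary (H →L[ℂ] H)) :
    ∀ {x y : K} (p : PPath K x y), p.eval z ∈ unitary (H →L[ℂ] H)
  | _, _, .single b => hzu b
  | _, _, .cons b p => mul_mem (hzu b) (eval_unitary z hzu p)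

lemma conj_intertwine {M : Type*} [Monoid M] [StarMul M] (u0 u1 X : M)
    (h0 : star u0 * u0 = 1) (h1 : star u1 * u1 = 1) :
    (u0 * X * star u0) * (u0 * star u1) = (u0 * star u1) * (u1 * X * star u1) := by
  calc (u0 * X * star u0) * (u0 * star u1)
      = u0 * X * ((star u0 * u0) * star u1) := by simp only [mul_assoc]
    _ = u0 * (X * star u1) := by rw [h0, one_mul, mul_assoc]
    _ = u0 * ((star u1 * u1) * (X * star u1)) := by rw [h1, one_mul]
    _ = (u0 * star u1) * (u1 * X * star u1) := by simp only [mul_assoc]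

lemma intertwine_of_commute {M : Type*} [Monoid M] [StarMul M] (u0 u1 zb X : M)
    (h0 : u0 * star u0 = 1) (h1 : u1 * star u1 = 1)
    (hc : X * (star u0 * (zb * u1)) = (star u0 * (zb * u1)) * X) :
    (u0 * X * star u0) * zb = zb * (u1 * X * star u1) := by
  have key := congrArg (fun t => u0 * t * star u1) hc
  simp only [mul_assoc] at key
  calc (u0 * X * star u0) * zb
      = u0 * (X * (star u0 * (zb * (u1 * star u1)))) := by
        rw [h1, mul_one]; simp only [mul_assoc]
    _ = u0 * ((star u0 * (zb * (u1 * (X * star u1))))) := by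
        simpa only [mul_assoc] using key
    _ = (u0 * star u0) * (zb * (u1 * (X * star u1))) := by simp only [mul_assoc]
    _ = zb * (u1 * X * star u1) := by rw [h0, one_mul]; simp only [mul_assoc]

end Aux

theorem loop_algebra_embedding {K : Type*} [PartialOrder K]
    {H : Type*} [NormedAddCommGroup H] [InnerProductSpace ℂ H] [CompleteSpace H]
    (o : K) (P : ∀ a : K, PPath K o a)
    (hP : PHomotopic (P o) (PPath.single (OneSimplex.degenerate o)))
    (z : OneSimplex K → (H →L[ℂ] H))
    (hzu : ∀ b : OneSimplex K, z b ∈ unitary (H →L[ℂ] H))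
    (hzc : ∀ c : TwoSimplex K, z c.face0 * z c.face2 = z c.face1) :
    (∀ (a : K) (X Y : H →L[ℂ] H),
        (P a).eval z * (X * Y) * star ((P a).eval z) =
          ((P a).eval z * X * star ((P a).eval z)) *
            ((P a).eval z * Y * star ((P a).eval z))) ∧
    (∀ (a : K) (X : H →L[ℂ] H),
        (P a).eval z * star X * star ((P a).eval z) =
          star ((P a).eval z * X * star ((P a).eval z))) ∧
    (∀ X Y : H →L[ℂ] H,
        (∀ a : K, (P a).eval z * X * star ((P a).eval z) =
          (P a).eval z * Y * star ((P a).eval z)) → X = Y) ∧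
    (∀ X ∈ loopVN o z, ∀ b : OneSimplex K,
        ((P b.face0).eval z * X * star ((P b.face0).eval z)) * chargeComp P z b =
          chargeComp P z b * ((P b.face1).eval z * X * star ((P b.face1).eval z))) ∧
    (∀ X ∈ loopVN o z, (∀ Y ∈ loopVN o z, Commute X Y) →
        ∀ b : OneSimplex K,
          ((P b.face0).eval z * X * star ((P b.face0).eval z)) * z b =
            z b * ((P b.face1).eval z * X * star ((P b.face1).eval z))) := by
  have hu : ∀ (a : K), (P a).eval z ∈ unitary (H →L[ℂ] H) := fun a =>
    eval_unitary z hzu (P a)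
  have hsl : ∀ (a : K), star ((P a).eval z) * (P a).eval z = 1 := fun a =>
    ((Unitary.mem_iff).1 (hu a)).1
  have hsr : ∀ (a : K), (P a).eval z * star ((P a).eval z) = 1 := fun a =>
    ((Unitary.mem_iff).1 (hu a)).2
  refine ⟨?_, ?_, ?_, ?_, ?_⟩
  · intro a X Y
    calc (P a).eval z * (X * Y) * star ((P a).eval z)
        = (P a).eval z * (X * ((star ((P a).eval z) * (P a).eval z) * Y)) *
            star ((P a).eval z) := by rw [hsl, one_mul]
      _ = ((P a).eval z * X * star ((P a).eval z)) *
            ((P a).eval z * Y * star ((P a).eval z)) := by simp only [mul_assoc]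
  · intro a X
    rw [star_mul, star_mul, star_star, mul_assoc]
  · intro X Y h
    have h' := h o
    have : ∀ T : H →L[ℂ] H,
        star ((P o).eval z) * ((P o).eval z * T * star ((P o).eval z)) * (P o).eval z
          = T := by
      intro T
      calc star ((P o).eval z) * ((P o).eval z * T * star ((P o).eval z)) * (P o).eval z
          = (star ((P o).eval z) * (P o).eval z) * T *
              (star ((P o).eval z) * (P o).eval z) := by simp only [mul_assoc]
        _ = T := by rw [hsl, one_mul, mul_one]
    calc X = star ((P o).eval z) *
          ((P o).eval z * X * star ((P o).eval z)) * (P o).eval z := (this X).symm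
      _ = star ((P o).eval z) *
          ((P o).eval z * Y * star ((P o).eval z)) * (P o).eval z := by rw [h']
      _ = Y := this Y
  · intro X _ b
    have hcc : chargeComp P z b =
        (P b.face0).eval z * star ((P b.face1).eval z) := by
      unfold chargeComp
      rw [PPath.eval_comp, eval_rev_star z hzu hzc]
    rw [hcc]
    exact conj_intertwine _ _ X (hsl b.face0) (hsl b.face1)
  · intro X hX hXc b
    have hmem : star ((P b.face0).eval z) * (z b * (P b.face1).eval z) ∈ loopVN o z := by
      apply Set.subset_centralizer_centralizer
      refine ⟨(PPath.comp (P b.face0).rev (PPath.cons b (P b.face1))), ?_⟩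
      rw [PPath.eval_comp, eval_rev_star z hzu hzc]
      rfl
    have hc := hXc _ hmem
    exact intertwine_of_commute _ _ _ X (hsr b.face0) (hsr b.face1) hc
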